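/- For every natural number a, no transitive avoidance game on a board of 2^a points is a Player I win. -/

import Mathlib

/-- A strategy: given the history of moves so far (in chronological order),
choose the next point to claim. -/
abbrev Strategy (X : Type*) := List X → X

/-- A strategy is valid if, whenever the history has no repeats and the board is
not yet full, it picks a previously unclaimed point. -/
def ValidStrategy {X : Type*} [Fintype X] (s : Strategy X) : Prop :=
  ∀ h : List X, h.Nodup → h.length < Fintype.card X → s h ∉ h

/-- The play (history of moves) after `k` moves, when Player I uses `sI`
(moving at even times) and Player II uses `sII` (moving at odd times). -/
def play {X : Type*} (sI sII : Strategy X) : ℕ → List X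
  | 0 => []
  | k + 1 =>
      let h := play sI sII k
      h ++ [if k % 2 = 0 then sI h else sII h]

/-- The set of points claimed by Player I in a history: the moves at even positions. -/
def claimedI {X : Type*} (h : List X) : Set X :=
  { x | ∃ i : ℕ, i % 2 = 0 ∧ h[i]? = some x }

/-- The set of points claimed by Player II in a history: the moves at odd positions. -/
def claimedII {X : Type*} (h : List X) : Set X :=
  { x | ∃ i : ℕ, i % 2 = 1 ∧ h[i]? = some x }

/-- A set of points contains a line of `ℒ`. -/
def ContainsLine {X : Type*} (ℒ : Set (Finset X)) (S : Set X) : Prop :=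
  ∃ L ∈ ℒ, ↑L ⊆ S

/-- The avoidance game with lines `ℒ` is a Player I win: Player I has a valid strategy
such that against every valid strategy of Player II there is a moment at which
Player II's claimed set contains a line while Player I's claimed set does not
(by monotonicity of the claimed sets, this says exactly that Player II's set comes
to contain a line strictly before Player I's set does). -/
def PIWin {X : Type*} [Fintype X] (ℒ : Set (Finset X)) : Prop :=
  ∃ sI : Strategy X, ValidStrategy sI ∧
    ∀ sII : Strategy X, ValidStrategy sII →
      ∃ k ≤ Fintype.card X,
        ContainsLine ℒ (claimedII (play sI sII k)) ∧
        ¬ ContainsLine ℒ (claimedI (play sI sII k))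

/-- A permutation of the board is an automorphism of the game if it maps the
family of lines onto itself. -/
def IsGameAuto {X : Type*} [DecidableEq X] (ℒ : Set (Finset X)) (g : Equiv.Perm X) : Prop :=
  ∀ L : Finset X, L ∈ ℒ ↔ L.image g ∈ ℒ

/-- The game is transitive if its automorphism group acts transitively on the board. -/
def TransitiveGame {X : Type*} [DecidableEq X] (ℒ : Set (Finset X)) : Prop :=
  ∀ x y : X, ∃ g : Equiv.Perm X, IsGameAuto ℒ g ∧ g x = y

open Equiv

section Mirror

variable {X : Type*} [Fintype X] [DecidableEq X] [Nonempty X]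

lemma play_succ (sI sII : Strategy X) (k : ℕ) :
    play sI sII (k+1) =
      play sI sII k ++ [if k % 2 = 0 then sI (play sI sII k) else sII (play sI sII k)] := rfl

lemma play_length (sI sII : Strategy X) (k : ℕ) : (play sI sII k).length = k := by
  induction k with
  | zero => rfl
  | succ k ih => rw [play_succ, List.length_append, ih]; simp

lemma play_get?_mono (sI sII : Strategy X) {k k' : ℕ} (hk : k ≤ k') {i : ℕ} {x : X}
    (h : (play sI sII k)[i]? = some x) : (play sI sII k')[i]? = some x := by
  induction k' with
  | zero => exact (Nat.le_zero.mp hk) ▸ h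
  | succ k' ih =>
    rcases Nat.lt_or_ge k (k'+1) with hlt | hge
    · have h' := ih (by omega)
      rw [play_succ, List.getElem?_append_left]
      · exact h'
      · have := List.getElem?_eq_some_iff.mp h' |>.1
        exact this
    · have : k = k' + 1 := le_antisymm hk hge
      exact this ▸ h

lemma claimedI_mono (sI sII : Strategy X) {k k' : ℕ} (hk : k ≤ k') :
    claimedI (play sI sII k) ⊆ claimedI (play sI sII k') := by
  rintro x ⟨i, hi, hget⟩
  exact ⟨i, hi, play_get?_mono sI sII hk hget⟩

noncomputable def fallback (h : List X) : X :=
  if hx : ∃ x : X, x ∉ h then hx.choose else Classical.arbitrary X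

lemma fallback_not_mem (h : List X) (hlen : h.length < Fintype.card X) : fallback h ∉ h := by
  have hx : ∃ x : X, x ∉ h := by
    by_contra hc
    push_neg at hc
    have : (Finset.univ : Finset X) ⊆ h.toFinset := fun x _ => List.mem_toFinset.mpr (hc x)
    have h1 : Fintype.card X ≤ h.toFinset.card := Finset.card_le_card this
    have h2 : h.toFinset.card ≤ h.length := h.toFinset_card_le
    omega
  rw [fallback, dif_pos hx]
  exact hx.choose_spec

noncomputable def mirror (σ : Perm X) : Strategy X := fun h =>
  (h.getLast?.map (fun x => if σ x ∈ h then fallback h else σ x)).getD (fallback h)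

lemma mirror_valid (σ : Perm X) : ValidStrategy (mirror σ) := by
  intro h _ hlen
  rw [mirror]
  cases hl : h.getLast? with
  | none => simpa using fallback_not_mem h hlen
  | some x =>
    simp only [hl, Option.map_some, Option.getD_some]
    split
    · exact fallback_not_mem h hlen
    · assumption

lemma mirror_concat (σ : Perm X) (h : List X) (x : X) (hx : σ x ∉ h ++ [x]) :
    mirror σ (h ++ [x]) = σ x := by
  rw [mirror, List.getLast?_concat, Option.map_some, Option.getD_some, if_neg hx]

/-- closure of a paired history under σ -/
lemma mem_of_pair {σ : Perm X} (hσ2 : ∀ x, σ (σ x) = x) {h : List X}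
    (hpair : ∀ j : ℕ, h[2*j+1]? = Option.map σ (h[2*j]?))
    {x : X} (hx : x ∈ h) : σ x ∈ h := by
  obtain ⟨⟨i, hi⟩, rfl⟩ := List.mem_iff_get.mp hx
  have hget : h[i]? = some (h.get ⟨i, hi⟩) := List.getElem?_eq_getElem hi
  rcases Nat.even_or_odd i with ⟨j, hj⟩ | ⟨j, hj⟩
  · have := hpair j
    rw [show 2*j = i by omega, hget] at this
    exact List.mem_of_getElem? this
  · have := hpair j
    rw [show 2*j+1 = i by omega, hget] at this
    cases hy : h[2*j]? with
    | none => rw [hy] at this; simp at this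
    | some y =>
      rw [hy] at this
      simp only [Option.map_some] at this
      have hxy : h.get ⟨i, hi⟩ = σ y := by injection this
      rw [hxy, hσ2]
      exact List.mem_of_getElem? hy

lemma claimedII_pair {σ : Perm X} (hσ2 : ∀ x, σ (σ x) = x) {h : List X}
    (hpair : ∀ j : ℕ, h[2*j+1]? = Option.map σ (h[2*j]?))
    {x : X} (hx : x ∈ claimedII h) : σ x ∈ claimedI h := by
  obtain ⟨i, hi, hget⟩ := hx
  obtain ⟨j, hj⟩ : ∃ j, i = 2*j+1 := ⟨i/2, by omega⟩
  subst hj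
  have := hpair j
  rw [hget] at this
  cases hy : h[2*j]? with
  | none => rw [hy] at this; simp at this
  | some y =>
    rw [hy] at this
    simp only [Option.map_some] at this
    have hxy : x = σ y := Option.some.inj this
    refine ⟨2*j, by omega, ?_⟩
    rw [hy, hxy, hσ2]

lemma pairing (σ : Perm X) (hσ2 : ∀ x, σ (σ x) = x) (hfpf : ∀ x, σ x ≠ x)
    (sI : Strategy X) (hI : ValidStrategy sI) :
    ∀ m : ℕ, 2*m ≤ Fintype.card X →
      (play sI (mirror σ) (2*m)).Nodup ∧
      ∀ j : ℕ, (play sI (mirror σ) (2*m))[2*j+1]?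
          = Option.map σ ((play sI (mirror σ) (2*m))[2*j]?) := by
  intro m
  induction m with
  | zero =>
    intro _
    refine ⟨List.nodup_nil, fun j => ?_⟩
    show ([] : List X)[_]? = Option.map σ (([] : List X)[_]?)
    simp
  | succ m ih =>
    intro hm
    obtain ⟨hnd, hpair⟩ := ih (by omega)
    set h := play sI (mirror σ) (2*m) with hh
    have hlen : h.length = 2*m := play_length _ _ _
    set x := sI h with hx
    have hxh : x ∉ h := hI h hnd (by omega)
    have e1 : play sI (mirror σ) (2*m+1) = h ++ [x] := by
      rw [play_succ, if_pos (by omega : (2*m) % 2 = 0)]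
    have hσxh : σ x ∉ h := by
      intro hc
      have := mem_of_pair hσ2 hpair hc
      rw [hσ2] at this
      exact hxh this
    have hσx : σ x ∉ h ++ [x] := by
      intro hmem
      rcases List.mem_append.mp hmem with hm1 | hm2
      · exact hσxh hm1
      · simp only [List.mem_singleton] at hm2
        exact hfpf x hm2
    have e2 : play sI (mirror σ) (2*(m+1)) = h ++ [x] ++ [σ x] := by
      have h21 : 2*(m+1) = (2*m+1)+1 := by ring
      rw [h21, play_succ, e1, if_neg (by omega : ¬ (2*m+1) % 2 = 0),
        mirror_concat σ h x hσx]
    rw [e2]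
    constructor
    · have : (h ++ [x]).Nodup := by
        rw [List.nodup_append]
        exact ⟨hnd, List.nodup_singleton x, fun a ha b hb => by simp at hb; subst hb; exact fun e => hxh (e ▸ ha)⟩
      rw [List.nodup_append]
      refine ⟨this, List.nodup_singleton _, ?_⟩
      intro y hy z hz hyz
      simp only [List.mem_singleton] at hz
      subst hz
      subst hyz
      exact hσx hy
    · intro j
      have hlen1 : (h ++ [x]).length = 2*m+1 := by simp [hlen]
      have hlen2 : (h ++ [x] ++ [σ x]).length = 2*m+2 := by simp [hlen]
      rcases lt_trichotomy j m with hj | rfl | hj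
      · have h1 : (h ++ [x] ++ [σ x])[2*j+1]? = h[2*j+1]? := by
          rw [List.getElem?_append_left (by omega : 2*j+1 < (h ++ [x]).length),
            List.getElem?_append_left (by omega : 2*j+1 < h.length)]
        have h0 : (h ++ [x] ++ [σ x])[2*j]? = h[2*j]? := by
          rw [List.getElem?_append_left (by omega : 2*j < (h ++ [x]).length),
            List.getElem?_append_left (by omega : 2*j < h.length)]
        rw [h1, h0]
        exact hpair j
      · have h1 : (h ++ [x] ++ [σ x])[2*j+1]? = some (σ x) := by
          rw [show 2*j+1 = (h ++ [x]).length from hlen1.symm]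
          exact List.getElem?_concat_length
        have h0 : (h ++ [x] ++ [σ x])[2*j]? = some x := by
          rw [List.getElem?_append_left (by omega : 2*j < (h ++ [x]).length),
            show 2*j = h.length from hlen.symm]
          exact List.getElem?_concat_length
        rw [h1, h0]
        rfl
      · have h1 : (h ++ [x] ++ [σ x])[2*j+1]? = none :=
          List.getElem?_eq_none (by omega)
        have h0 : (h ++ [x] ++ [σ x])[2*j]? = none :=
          List.getElem?_eq_none (by omega)
        rw [h1, h0]
        rfl

theorem no_PIWin_of_fpf_involution (ℒ : Set (Finset X)) (σ : Perm X)
    (hauto : IsGameAuto ℒ σ) (hσ2 : ∀ x, σ (σ x) = x) (hfpf : ∀ x, σ x ≠ x) :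
    ¬ PIWin ℒ := by
  rintro ⟨sI, hI, hwin⟩
  obtain ⟨k, hk, hII, hnI⟩ := hwin (mirror σ) (mirror_valid σ)
  apply hnI
  obtain ⟨L, hL, hLsub⟩ := hII
  set m := k / 2 with hm
  have h2m : 2*m ≤ k := by omega
  have hk2 : k ≤ 2*m+1 := by omega
  obtain ⟨hnd, hpair⟩ := pairing σ hσ2 hfpf sI hI m (le_trans h2m hk)
  set h := play sI (mirror σ) (2*m) with hh
  have hlen : h.length = 2*m := play_length _ _ _
  have hsub2 : claimedII (play sI (mirror σ) k) ⊆ claimedII h := by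
    rintro y ⟨i, hi, hget⟩
    have hik : i < k := by
      have h1 := List.getElem?_eq_some_iff.mp hget |>.1
      rwa [play_length] at h1
    have hi2m : i < 2*m := by omega
    obtain ⟨z, hz⟩ : ∃ z, h[i]? = some z :=
      ⟨_, List.getElem?_eq_getElem (by omega : i < h.length)⟩
    have h2 := play_get?_mono sI (mirror σ) h2m (hh ▸ hz)
    rw [hget] at h2
    exact ⟨i, hi, by rw [hz, Option.some.inj h2]⟩
  refine ⟨L.image σ, (hauto L).mp hL, ?_⟩
  intro y hy
  simp only [Finset.coe_image, Set.mem_image, Finset.mem_coe] at hy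
  obtain ⟨w, hw, rfl⟩ := hy
  have hw2 : w ∈ claimedII h := hsub2 (hLsub hw)
  have := claimedII_pair hσ2 hpair hw2
  exact claimedI_mono sI (mirror σ) h2m this

end Mirror

section GroupTheory

variable {X : Type*} [Fintype X] [DecidableEq X]

def autGroup (ℒ : Set (Finset X)) : Subgroup (Perm X) where
  carrier := {g | IsGameAuto ℒ g}
  one_mem' := by
    intro L
    have h1 : L.image ⇑(1 : Perm X) = L := by ext y; simp
    rw [h1]
  mul_mem' := by
    intro g h hg hh L
    have : L.image ⇑(g * h) = (L.image ⇑h).image ⇑g := by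
      rw [Finset.image_image]; rfl
    rw [this]
    exact (hh L).trans (hg _)
  inv_mem' := by
    intro g hg L
    have h1 := hg (L.image ⇑g⁻¹)
    have h2 : (L.image ⇑g⁻¹).image ⇑g = L := by
      ext y; simp
    rw [h2] at h1
    exact h1.symm

set_option maxHeartbeats 1000000 in
theorem exists_fpf_involution (ℒ : Set (Finset X)) (htrans : TransitiveGame ℒ)
    (a : ℕ) (hcard : Fintype.card X = 2 ^ a) (ha : 1 ≤ a) :
    ∃ σ : Perm X, IsGameAuto ℒ σ ∧ (∀ x, σ (σ x) = x) ∧ (∀ x, σ x ≠ x) := by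
  classical
  haveI : Fact (Nat.Prime 2) := ⟨Nat.prime_two⟩
  haveI : Nonempty X := Fintype.card_pos_iff.mp (by rw [hcard]; positivity)
  set G := autGroup ℒ with hG
  haveI htr : MulAction.IsPretransitive ↥G X := by
    constructor
    intro x y
    obtain ⟨g, hg, hgx⟩ := htrans x y
    exact ⟨⟨g, hg⟩, hgx⟩
  obtain ⟨P⟩ : Nonempty (Sylow 2 ↥G) := inferInstance
  set PG : Subgroup ↥G := ↑P with hPG
  have hx0 : Nat.card X = 2 ^ a := by rw [Nat.card_eq_fintype_card, hcard]
  have hPcard : Nat.card ↥PG = 2 ^ ((Nat.card ↥G).factorization 2) :=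
    P.card_eq_multiplicity
  -- the Sylow 2-subgroup acts transitively
  have horb : ∀ x : X, MulAction.orbit ↥PG x = Set.univ := by
    intro x
    set S := MulAction.stabilizer ↥G x with hS
    have hindex : S.index = 2 ^ a := by
      rw [hS, MulAction.index_stabilizer_of_transitive, hx0]
    have hGcard : Nat.card ↥G = 2 ^ a * Nat.card ↥S := by
      rw [← hindex]; exact (Subgroup.index_mul_card S).symm
    have hSne : Nat.card ↥S ≠ 0 := Nat.card_pos.ne'
    have hnu : (Nat.card ↥G).factorization 2
        = a + (Nat.card ↥S).factorization 2 := by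
      rw [hGcard, Nat.factorization_mul (by positivity) hSne]
      rw [Nat.Prime.factorization_pow Nat.prime_two]
      simp
    set T := MulAction.stabilizer ↥PG x with hT
    have hTdvdP : Nat.card ↥T ∣ Nat.card ↥PG := Subgroup.card_subgroup_dvd_card T
    obtain ⟨t, ht, hTcard⟩ := (Nat.dvd_prime_pow Nat.prime_two).mp (hPcard ▸ hTdvdP)
    -- T embeds into S
    have hTS : Nat.card ↥T ∣ Nat.card ↥S := by
      have hmem : ∀ u : ↥T, ((u : ↥PG) : ↥G) ∈ S := by
        intro u
        exact u.2
      let φ : ↥T →* ↥S :=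
        { toFun := fun u => ⟨((u : ↥PG) : ↥G), hmem u⟩
          map_one' := rfl
          map_mul' := fun u v => rfl }
      have hinj : Function.Injective φ := by
        intro u v huv
        have h1 : ((u : ↥PG) : ↥G) = ((v : ↥PG) : ↥G) :=
          congrArg (fun w : ↥S => (w : ↥G)) huv
        apply Subtype.ext
        apply Subtype.ext
        exact h1
      exact Subgroup.card_dvd_of_injective φ hinj
    have hta : t ≤ (Nat.card ↥S).factorization 2 := by
      rw [hTcard] at hTS
      exact (Nat.Prime.pow_dvd_iff_le_factorization Nat.prime_two hSne).mp hTS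
    have hTindex : T.index * 2 ^ t = 2 ^ ((Nat.card ↥G).factorization 2) := by
      rw [← hTcard, ← hPcard]; exact Subgroup.index_mul_card T
    have hTidx : T.index = 2 ^ ((Nat.card ↥G).factorization 2 - t) := by
      have h2 : 2 ^ ((Nat.card ↥G).factorization 2 - t) * 2 ^ t
          = 2 ^ ((Nat.card ↥G).factorization 2) := by
        rw [← pow_add]
        congr 1
        omega
      have := hTindex.trans h2.symm
      exact Nat.eq_of_mul_eq_mul_right (by positivity) this
    have hge : 2 ^ a ≤ T.index := by
      rw [hTidx]
      exact Nat.pow_le_pow_right (by norm_num) (by omega)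
    have horbcard : (MulAction.orbit ↥PG x).ncard = T.index :=
      (MulAction.index_stabilizer ↥PG x).symm
    have huniv : (Set.univ : Set X).ncard = 2 ^ a := by
      rw [Set.ncard_univ, hx0]
    refine Set.eq_of_subset_of_ncard_le (Set.subset_univ _) ?_ Set.finite_univ
    rw [huniv, horbcard]
    exact hge
  -- a central element of order two in the Sylow subgroup
  have hnu1 : 1 ≤ (Nat.card ↥G).factorization 2 := by
    have h2a : 2 ^ a ∣ Nat.card ↥G := by
      have := Subgroup.index_mul_card (MulAction.stabilizer ↥G (Classical.arbitrary X))
      rw [MulAction.index_stabilizer_of_transitive, hx0] at this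
      exact ⟨_, this.symm⟩
    have := (Nat.Prime.pow_dvd_iff_le_factorization Nat.prime_two
      (Nat.card_pos (α := ↥G)).ne').mp h2a
    omega
  haveI : Nontrivial ↥PG := by
    rw [← Finite.one_lt_card_iff_nontrivial, hPcard]
    exact Nat.one_lt_two_pow_iff.mpr (by omega)
  have hp2 : IsPGroup 2 ↥PG := P.isPGroup'
  haveI : Nontrivial (Subgroup.center ↥PG) := hp2.center_nontrivial
  have hZdvd : Nat.card (Subgroup.center ↥PG) ∣ 2 ^ ((Nat.card ↥G).factorization 2) :=
    hPcard ▸ Subgroup.card_subgroup_dvd_card _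
  have h2Z : 2 ∣ Nat.card (Subgroup.center ↥PG) := by
    obtain ⟨j, hj, hcj⟩ := (Nat.dvd_prime_pow Nat.prime_two).mp hZdvd
    have h1 : 1 < Nat.card (Subgroup.center ↥PG) :=
      Finite.one_lt_card_iff_nontrivial.mpr inferInstance
    rcases Nat.eq_zero_or_pos j with rfl | hjpos
    · rw [pow_zero] at hcj; omega
    · rw [hcj]
      exact dvd_pow_self 2 (by omega)
  obtain ⟨z, hz⟩ := exists_prime_orderOf_dvd_card' 2 h2Z
  -- the fixed-point-free involution
  set σ : Perm X := (((z : ↥PG) : ↥G) : Perm X) with hσ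
  have hzz : z * z = 1 := by
    have := pow_orderOf_eq_one z
    rwa [hz, pow_two] at this
  have hσσ : σ * σ = 1 :=
    congrArg (fun w : ↥(Subgroup.center ↥PG) => (((w : ↥PG) : ↥G) : Perm X)) hzz
  have hσ2 : ∀ x, σ (σ x) = x := by
    intro x
    rw [← Perm.mul_apply, hσσ, Perm.one_apply]
  have hauto : IsGameAuto ℒ σ := ((z : ↥PG) : ↥G).2
  refine ⟨σ, hauto, hσ2, ?_⟩
  intro x hx
  have hone : ∀ y : X, σ y = y := by
    intro y
    have hy : y ∈ MulAction.orbit ↥PG x := (horb x) ▸ Set.mem_univ y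
    obtain ⟨p, hp⟩ := hy
    have hcomm : p * (z : ↥PG) = (z : ↥PG) * p := Subgroup.mem_center_iff.mp z.2 p
    have hππ : (((p : ↥G) : Perm X)) * σ = σ * (((p : ↥G) : Perm X)) :=
      congrArg (fun w : ↥PG => ((w : ↥G) : Perm X)) hcomm
    have hpx : ((p : ↥G) : Perm X) x = y := hp
    calc σ y = σ (((p : ↥G) : Perm X) x) := by rw [hpx]
      _ = (σ * ((p : ↥G) : Perm X)) x := rfl
      _ = (((p : ↥G) : Perm X) * σ) x := by rw [hππ]
      _ = ((p : ↥G) : Perm X) (σ x) := rfl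
      _ = ((p : ↥G) : Perm X) x := by rw [hx]
      _ = y := hpx
  have hσ1 : σ = 1 := Equiv.ext hone
  have hz1 : z = 1 := by
    apply Subtype.ext
    apply Subtype.ext
    apply Subtype.ext
    exact hσ1
  rw [hz1, orderOf_one] at hz
  omega

end GroupTheory

/-- For every natural number `a`, no transitive avoidance game on a board of `2^a`
points is a Player I win. -/
theorem statement1 (a : ℕ) (ℒ : Set (Finset (Fin (2 ^ a))))
    (htrans : TransitiveGame ℒ) : ¬ PIWin ℒ := by
  rcases Nat.eq_zero_or_pos a with rfl | ha
  · rintro ⟨sI, hI, hwin⟩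
    obtain ⟨k, hk, hII, hnI⟩ := hwin sI hI
    have hcard : Fintype.card (Fin (2 ^ 0)) = 1 := by simp
    rw [hcard] at hk
    obtain ⟨L, hL, hLsub⟩ := hII
    apply hnI
    refine ⟨L, hL, ?_⟩
    intro y hy
    obtain ⟨i, hi, hget⟩ := hLsub hy
    have hik : i < k := by
      have h1 := List.getElem?_eq_some_iff.mp hget |>.1
      rwa [play_length] at h1
    exact absurd hi (by omega)
  · haveI : NeZero (2 ^ a) := ⟨by positivity⟩
    have hcard : Fintype.card (Fin (2 ^ a)) = 2 ^ a := by simp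
    obtain ⟨σ, hauto, hσ2, hfpf⟩ := exists_fpf_involution ℒ htrans a hcard ha
    exact no_PIWin_of_fpf_involution ℒ σ hauto hσ2 hfpf
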